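/- Let G_n = (-L_n^2 + (2n+5)L_n - 2n - 4) / (2(n+3)(n+2)) with L_n = 3 + Binomial(n-1,p), 0 < p < 1. Then E[G_n] → p(2-p)/2 as n → ∞, and moreover G_n → p(2-p)/2 in probability and in L^r for every r > 0. -/

import Mathlib

open Filter MeasureTheory Asymptotics Topology

/-- Expectation of `f` under a Binomial(m, p) distribution, as a finite sum. -/
noncomputable def binExp (m : ℕ) (p : ℝ) (f : ℕ → ℝ) : ℝ :=
  ∑ k ∈ Finset.range (m+1), (m.choose k : ℝ) * p^k * (1-p)^(m-k) * f k

/-- Variance of `f` under a Binomial(m, p) distribution. -/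
noncomputable def binVar (m : ℕ) (p : ℝ) (f : ℕ → ℝ) : ℝ :=
  binExp m p (fun k => (f k - binExp m p f)^2)

/-- The degree-based Gini index of a random spider tree at time n. -/
noncomputable def giniF : ℕ → ℕ → ℝ :=
  (fun (n : ℕ) (k : ℕ) => (-(((k : ℝ) + 3) ^ 2) + (2*(n : ℝ)+5)*((k : ℝ)+3) - 2*(n : ℝ) - 4) / (2*((n : ℝ)+3)*((n : ℝ)+2)))

lemma bin_sum_one (m : ℕ) (p : ℝ) :
    ∑ k ∈ Finset.range (m+1), (m.choose k : ℝ) * p^k * (1-p)^(m-k) = 1 := by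
  have h := add_pow p (1-p) m
  rw [show p+(1-p) = (1:ℝ) by ring, one_pow] at h
  calc ∑ k ∈ Finset.range (m+1), (m.choose k : ℝ) * p^k * (1-p)^(m-k)
      = ∑ k ∈ Finset.range (m+1), p^k * (1-p)^(m-k) * (m.choose k : ℝ) :=
        Finset.sum_congr rfl fun k _ => by ring
    _ = 1 := h.symm


lemma bin_shift (m : ℕ) (p : ℝ) (f : ℕ → ℝ) :
    ∑ k ∈ Finset.range (m+2), ((m+1).choose k : ℝ) * p^k * (1-p)^(m+1-k) * ((k:ℝ) * f k)
      = ((m:ℝ)+1) * p * ∑ j ∈ Finset.range (m+1), (m.choose j : ℝ) * p^j * (1-p)^(m-j) * f (j+1) := by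
  rw [Finset.sum_range_succ']
  simp only [Nat.cast_zero, zero_mul, mul_zero, add_zero]
  rw [Finset.mul_sum]
  refine Finset.sum_congr rfl fun j hj => ?_
  have hn : ((m+1) * m.choose j : ℕ) = ((m+1).choose (j+1) * (j+1) : ℕ) := by
    simpa [Nat.succ_eq_add_one] using Nat.add_one_mul_choose_eq m j
  have hch : ((m+1).choose (j+1) : ℝ) * ((j:ℝ)+1) = ((m:ℝ)+1) * (m.choose j : ℝ) := by
    exact_mod_cast hn.symm
  have hsub : m + 1 - (j+1) = m - j := by omega
  rw [hsub]
  push_cast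
  linear_combination (p^(j+1) * (1-p)^(m-j) * f (j+1)) * hch


lemma bin_mom1 (m : ℕ) (p : ℝ) :
    ∑ k ∈ Finset.range (m+1), (m.choose k:ℝ)*p^k*(1-p)^(m-k)*(k:ℝ) = (m:ℝ)*p := by
  cases m with
  | zero => simp
  | succ m' =>
    have h := bin_shift m' p (fun _ => 1)
    simp only [mul_one] at h
    rw [bin_sum_one] at h
    push_cast
    rw [show m' + 1 + 1 = m' + 2 from rfl] at h
    calc ∑ k ∈ Finset.range (m'+1+1), ((m'+1).choose k:ℝ)*p^k*(1-p)^(m'+1-k)*(k:ℝ)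
        = ∑ k ∈ Finset.range (m'+2), ((m'+1).choose k:ℝ)*p^k*(1-p)^(m'+1-k)*(k:ℝ) := rfl
      _ = ((m':ℝ)+1) * p * 1 := h
      _ = ((m':ℝ)+1) * p := by ring


lemma bin_mom2 (m : ℕ) (p : ℝ) :
    ∑ k ∈ Finset.range (m+1), (m.choose k:ℝ)*p^k*(1-p)^(m-k)*((k:ℝ)*((k:ℝ)-1))
      = (m:ℝ)*((m:ℝ)-1)*p^2 := by
  cases m with
  | zero => norm_num
  | succ m' =>
    have h := bin_shift m' p (fun j => (j:ℝ)-1)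
    have h2 : ∀ j ∈ Finset.range (m'+1),
        (m'.choose j:ℝ)*p^j*(1-p)^(m'-j)*(((j+1:ℕ):ℝ)-1)
          = (m'.choose j:ℝ)*p^j*(1-p)^(m'-j)*(j:ℝ) := fun j _ => by push_cast; ring
    rw [Finset.sum_congr rfl h2, bin_mom1] at h
    push_cast
    calc ∑ k ∈ Finset.range (m'+1+1), ((m'+1).choose k:ℝ)*p^k*(1-p)^(m'+1-k)*((k:ℝ)*((k:ℝ)-1))
        = ((m':ℝ)+1) * p * ((m':ℝ)*p) := h
      _ = ((m':ℝ)+1)*(((m':ℝ)+1)-1)*p^2 := by ring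


lemma binExp_sq (m : ℕ) (p c : ℝ) :
    binExp m p (fun k => ((k:ℝ) - c)^2)
      = (m:ℝ)*((m:ℝ)-1)*p^2 + (1-2*c)*((m:ℝ)*p) + c^2 := by
  unfold binExp
  have h : ∀ k ∈ Finset.range (m+1),
      (m.choose k:ℝ)*p^k*(1-p)^(m-k)*(((k:ℝ)-c)^2)
        = (m.choose k:ℝ)*p^k*(1-p)^(m-k)*((k:ℝ)*((k:ℝ)-1))
          + (1-2*c)*((m.choose k:ℝ)*p^k*(1-p)^(m-k)*(k:ℝ))
          + c^2*((m.choose k:ℝ)*p^k*(1-p)^(m-k)) := fun k _ => by ring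
  rw [Finset.sum_congr rfl h, Finset.sum_add_distrib, Finset.sum_add_distrib,
    ← Finset.mul_sum, ← Finset.mul_sum, bin_mom1, bin_mom2, bin_sum_one]
  ring


lemma binExp_var (m : ℕ) (p : ℝ) :
    binExp m p (fun k => ((k:ℝ) - (m:ℝ)*p)^2) = (m:ℝ)*p*(1-p) := by
  rw [binExp_sq]; ring


lemma w_nonneg (m k : ℕ) {p : ℝ} (h0 : 0 ≤ p) (h1 : p ≤ 1) :
    0 ≤ (m.choose k:ℝ)*p^k*(1-p)^(m-k) :=
  mul_nonneg (mul_nonneg (Nat.cast_nonneg _) (pow_nonneg h0 _)) (pow_nonneg (by linarith) _)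


lemma binExp_mono (m : ℕ) {p : ℝ} (h0 : 0 ≤ p) (h1 : p ≤ 1) {f g : ℕ → ℝ}
    (h : ∀ k ∈ Finset.range (m+1), f k ≤ g k) : binExp m p f ≤ binExp m p g :=
  Finset.sum_le_sum fun k hk => mul_le_mul_of_nonneg_left (h k hk) (w_nonneg m k h0 h1)


lemma binExp_nonneg (m : ℕ) {p : ℝ} (h0 : 0 ≤ p) (h1 : p ≤ 1) {f : ℕ → ℝ}
    (h : ∀ k ∈ Finset.range (m+1), 0 ≤ f k) : 0 ≤ binExp m p f :=
  Finset.sum_nonneg fun k hk => mul_nonneg (w_nonneg m k h0 h1) (h k hk)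


lemma binExp_mul_const (m : ℕ) (p c : ℝ) (f : ℕ → ℝ) :
    binExp m p (fun k => f k * c) = binExp m p f * c := by
  unfold binExp
  rw [Finset.sum_mul]
  exact Finset.sum_congr rfl fun k _ => by ring


lemma binExp_const_add (m : ℕ) (p c : ℝ) (f : ℕ → ℝ) :
    binExp m p (fun k => c + f k) = c + binExp m p f := by
  unfold binExp
  have h : ∀ k ∈ Finset.range (m+1),
      (m.choose k:ℝ)*p^k*(1-p)^(m-k)*(c + f k)
        = (m.choose k:ℝ)*p^k*(1-p)^(m-k)*c + (m.choose k:ℝ)*p^k*(1-p)^(m-k)*(f k) :=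
    fun k _ => by ring
  rw [Finset.sum_congr rfl h, Finset.sum_add_distrib, ← Finset.sum_mul, bin_sum_one, one_mul]


lemma binExp_sub_const (m : ℕ) (p c : ℝ) (f : ℕ → ℝ) :
    binExp m p (fun k => f k - c) = binExp m p f - c := by
  have := binExp_const_add m p (-c) f
  simp only [neg_add_eq_sub] at this
  calc binExp m p (fun k => f k - c) = binExp m p (fun k => -c + f k) := by
        apply Finset.sum_congr rfl; intro k _; ring_nf
    _ = binExp m p f - c := by rw [binExp_const_add]; ring


lemma abs_binExp_le (m : ℕ) {p : ℝ} (h0 : 0 ≤ p) (h1 : p ≤ 1) (f : ℕ → ℝ) :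
    |binExp m p f| ≤ binExp m p (fun k => |f k|) := by
  refine (Finset.abs_sum_le_sum_abs _ _).trans (le_of_eq (Finset.sum_congr rfl fun k hk => ?_))
  rw [abs_mul, abs_of_nonneg (w_nonneg m k h0 h1)]


lemma pfacts1 {p : ℝ} (hp0 : 0 < p) (hp1 : p < 1) :
    7*p^2-13*p+4 ≤ 11 ∧ -9 ≤ 7*p^2-13*p+4 ∧ 5*p^2-11*p+2 ≤ 7 ∧ -9 ≤ 5*p^2-11*p+2 := by
  refine ⟨?_, ?_, ?_, ?_⟩ <;> nlinarith


lemma key_lower (p : ℝ) (hp0 : 0 < p) (hp1 : p < 1) {ε : ℝ} (hε : 0 < ε) {n k : ℕ}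
    (hn1 : 1 ≤ n) (hn : 42 ≤ ε*(n:ℝ)) (hk : k ∈ Finset.range ((n-1)+1))
    (h : ε ≤ |giniF n k - p*(2-p)/2|) :
    (ε*(n:ℝ)/4)^2 ≤ ((k:ℝ)-((n:ℝ)-1)*p)^2 := by
  have hN : (1:ℝ) ≤ (n:ℝ) := by exact_mod_cast hn1
  have hNpos : (0:ℝ) < (n:ℝ) := by linarith
  set N := (n:ℝ) with hNdef
  set x := (k:ℝ) with hxdef
  have hx0 : (0:ℝ) ≤ x := Nat.cast_nonneg k
  have hk' : k ≤ n - 1 := Nat.lt_succ_iff.mp (Finset.mem_range.mp hk)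
  have hxN : x ≤ N - 1 := by
    have h2 : (k:ℝ) ≤ ((n-1:ℕ):ℝ) := Nat.cast_le.mpr hk'
    rwa [Nat.cast_sub hn1, Nat.cast_one] at h2
  have hden : (0:ℝ) < 2*(N+3)*(N+2) := by positivity
  have heq : giniF n k - p*(2-p)/2
      = (-((x+3)^2) + (2*N+5)*(x+3) - 2*N - 4 - p*(2-p)*((N+3)*(N+2))) / (2*(N+3)*(N+2)) := by
    unfold giniF
    rw [← hNdef, ← hxdef]
    field_simp
  rw [heq, abs_div, abs_of_pos hden, le_div_iff₀ hden] at h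
  set d := x - (N-1)*p with hd
  set a := |d| with ha
  have ha0 : 0 ≤ a := abs_nonneg d
  have had : d ≤ a := le_abs_self d
  have had' : -a ≤ d := neg_abs_le d
  have haa : a^2 = d^2 := sq_abs d
  have hMp1 : (N-1)*p ≤ N-1 := mul_le_of_le_one_right (by linarith) hp1.le
  have hMp0 : 0 ≤ (N-1)*p := mul_nonneg (by linarith) hp0.le
  have haN : a ≤ N - 1 := by
    rw [ha]
    refine abs_le.mpr ⟨?_, ?_⟩ <;> rw [hd] <;> linarith
  have hnum : -((x+3)^2) + (2*N+5)*(x+3) - 2*N - 4 - p*(2-p)*((N+3)*(N+2))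
      = -d^2 + (2*N-1-2*(N-1)*p)*d + ((7*p^2-13*p+4)*N + (5*p^2-11*p+2)) := by
    rw [hd]; ring
  rw [hnum] at h
  have hcoefpos : (0:ℝ) ≤ 2*N-1-2*(N-1)*p := by nlinarith [mul_le_mul_of_nonneg_left hp1.le (by linarith : (0:ℝ) ≤ N-1)]
  have hcoef3N : 2*N-1-2*(N-1)*p ≤ 3*N := by nlinarith [mul_nonneg (by linarith : (0:ℝ) ≤ N-1) hp0.le]
  obtain ⟨hc1, hc2, hc3, hc4⟩ := pfacts1 hp0 hp1
  have hD : (7*p^2-13*p+4)*N + (5*p^2-11*p+2) ≤ 42*N := by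
    have := mul_le_mul_of_nonneg_right hc1 (by linarith : (0:ℝ) ≤ N)
    linarith
  have hD' : -42*N ≤ (7*p^2-13*p+4)*N + (5*p^2-11*p+2) := by
    have := mul_le_mul_of_nonneg_right hc2 (by linarith : (0:ℝ) ≤ N)
    linarith
  have h42N : 42*N ≤ ε*N*N := by
    have := mul_le_mul_of_nonneg_right hn (le_of_lt hNpos)
    linarith
  clear heq hnum hk hk'
  have hden2 : 2*N*N ≤ 2*(N+3)*(N+2) := by linarith
  have e2 : ε*(2*N*N) ≤ ε*(2*(N+3)*(N+2)) := mul_le_mul_of_nonneg_left hden2 hε.le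
  have hcoefa : (2*N-1-2*(N-1)*p)*a ≤ 3*N*a := mul_le_mul_of_nonneg_right hcoef3N ha0
  have hgoal : ε*N/4 ≤ a := by
    rcases le_abs.mp h with h1 | h1
    · -- ε·den ≤ -d² + coef·d + D
      have hcd : (2*N-1-2*(N-1)*p)*d ≤ 3*N*a :=
        le_trans (mul_le_mul_of_nonneg_left had hcoefpos) hcoefa
      have e3 : N*(ε*N) ≤ N*(3*a) := by linarith [mul_pos hε hNpos, hε.le, sq_nonneg d, hcd, hD, h42N]
      have e5 : ε*N ≤ 3*a := le_of_mul_le_mul_left e3 hNpos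
      linarith
    · -- ε·den ≤ d² - coef·d - D
      have hcd : -((2*N-1-2*(N-1)*p)*d) ≤ 3*N*a := by
        have h3 : (2*N-1-2*(N-1)*p)*(-d) ≤ (2*N-1-2*(N-1)*p)*a :=
          mul_le_mul_of_nonneg_left (by linarith) hcoefpos
        linarith [hcoefa, h3]
      have hsq : d^2 ≤ N*a := by
        have h4 : a*a ≤ (N-1)*a := mul_le_mul_of_nonneg_right haN ha0
        have h5 : a*a = d^2 := by rw [← haa]; ring
        linarith
      have e3 : N*(ε*N) ≤ N*(4*a) := by linarith [mul_pos hε hNpos, hε.le, hsq, hcd, hD', h42N]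
      have e5 : ε*N ≤ 4*a := le_of_mul_le_mul_left e3 hNpos
      linarith
  calc (ε*N/4)^2 ≤ a^2 := pow_le_pow_left₀ (by positivity) hgoal 2
    _ = d^2 := haa


lemma gini_bounded (p : ℝ) (hp0 : 0 < p) (hp1 : p < 1) {n k : ℕ}
    (hn1 : 1 ≤ n) (hk : k ∈ Finset.range ((n-1)+1)) :
    |giniF n k - p*(2-p)/2| ≤ 1 := by
  have hN : (1:ℝ) ≤ (n:ℝ) := by exact_mod_cast hn1
  set N := (n:ℝ) with hNdef
  set x := (k:ℝ) with hxdef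
  have hx0 : (0:ℝ) ≤ x := Nat.cast_nonneg k
  have hk' : k ≤ n - 1 := Nat.lt_succ_iff.mp (Finset.mem_range.mp hk)
  have hxN : x ≤ N - 1 := by
    have h2 : (k:ℝ) ≤ ((n-1:ℕ):ℝ) := Nat.cast_le.mpr hk'
    rwa [Nat.cast_sub hn1, Nat.cast_one] at h2
  have hden : (0:ℝ) < 2*(N+3)*(N+2) := by positivity
  have hnum : -((x+3)^2) + (2*N+5)*(x+3) - 2*N - 4 = (x+2)*(2*N+1-x) := by ring
  have hnum0 : (0:ℝ) ≤ -((x+3)^2) + (2*N+5)*(x+3) - 2*N - 4 := by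
    rw [hnum]
    exact mul_nonneg (by linarith) (by linarith)
  have hnum1 : -((x+3)^2) + (2*N+5)*(x+3) - 2*N - 4 ≤ 2*(N+3)*(N+2) := by
    nlinarith [sq_nonneg (2*x-(2*N-1)), sq_nonneg N]
  have hg0 : 0 ≤ giniF n k := by
    unfold giniF
    rw [← hNdef, ← hxdef]
    exact div_nonneg hnum0 hden.le
  have hg1 : giniF n k ≤ 1 := by
    unfold giniF
    rw [← hNdef, ← hxdef]
    exact (div_le_one hden).mpr hnum1
  have ht0 : 0 ≤ p*(2-p)/2 := by nlinarith
  have ht1 : p*(2-p)/2 ≤ 1 := by nlinarith [sq_nonneg (1-p)]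
  rw [abs_le]
  constructor <;> linarith


lemma tendsto_zero_of_le (f : ℕ → ℝ) (h0 : ∀ᶠ n in atTop, 0 ≤ f n)
    (h : ∀ δ : ℝ, 0 < δ → ∀ᶠ n in atTop, f n ≤ δ) :
    Tendsto f atTop (𝓝 0) := by
  rw [NormedAddCommGroup.tendsto_nhds_zero]
  intro ε hε
  filter_upwards [h0, h (ε/2) (by linarith)] with n hn1 hn2
  rw [Real.norm_eq_abs, abs_of_nonneg hn1]
  linarith


lemma ind_nonneg (p : ℝ) (hp0 : 0 < p) (hp1 : p < 1) (ε : ℝ) (n : ℕ) :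
    0 ≤ binExp (n-1) p (fun k => if ε ≤ |giniF n k - p*(2-p)/2| then (1:ℝ) else 0) := by
  refine binExp_nonneg _ hp0.le hp1.le fun k _ => ?_
  split_ifs <;> norm_num


lemma part2 (p : ℝ) (hp0 : 0 < p) (hp1 : p < 1) (ε : ℝ) (hε : 0 < ε) :
    Tendsto (fun n : ℕ =>
      binExp (n-1) p (fun k => if ε ≤ |giniF n k - p*(2-p)/2| then (1:ℝ) else 0))
      atTop (𝓝 0) := by
  have hglim : Tendsto (fun n : ℕ => 16/(ε^2*(n:ℝ))) atTop (𝓝 0) := by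
    have heq : (fun n : ℕ => 16/(ε^2*(n:ℝ))) = (fun n : ℕ => (16/ε^2)/(n:ℝ)) :=
      funext fun n => by rw [div_div]
    rw [heq]
    exact tendsto_const_div_atTop_nhds_zero_nat _
  refine squeeze_zero' (Filter.Eventually.of_forall fun n => ind_nonneg p hp0 hp1 ε n) ?_ hglim
  have hev : ∀ᶠ n : ℕ in atTop, 1 ≤ n ∧ 42 ≤ ε*(n:ℝ) := by
    have h1 : Tendsto (fun n : ℕ => ε*(n:ℝ)) atTop atTop :=
      Tendsto.const_mul_atTop hε tendsto_natCast_atTop_atTop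
    filter_upwards [Filter.eventually_ge_atTop 1, h1.eventually_ge_atTop 42] with n ha hb
    exact ⟨ha, hb⟩
  filter_upwards [hev] with n ⟨hn1, hn42⟩
  have hNpos : (0:ℝ) < (n:ℝ) := by exact_mod_cast hn1
  have hcast : ((n-1:ℕ):ℝ) = (n:ℝ)-1 := by
    rw [Nat.cast_sub hn1, Nat.cast_one]
  have hq : (0:ℝ) < ε^2*(n:ℝ)^2 := by positivity
  have hb : ∀ k ∈ Finset.range ((n-1)+1),
      (if ε ≤ |giniF n k - p*(2-p)/2| then (1:ℝ) else 0)
        ≤ ((k:ℝ)-((n:ℝ)-1)*p)^2 * (16/(ε^2*(n:ℝ)^2)) := by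
    intro k hk
    split_ifs with hif
    · have hkey := key_lower p hp0 hp1 hε hn1 hn42 hk hif
      have hkey' : ε^2*(n:ℝ)^2/16 ≤ ((k:ℝ)-((n:ℝ)-1)*p)^2 := by nlinarith [hkey]
      rw [mul_div_assoc' _ (16:ℝ) _, le_div_iff₀ hq, one_mul]
      linarith
    · positivity
  calc binExp (n-1) p (fun k => if ε ≤ |giniF n k - p*(2-p)/2| then (1:ℝ) else 0)
      ≤ binExp (n-1) p (fun k => ((k:ℝ)-((n:ℝ)-1)*p)^2 * (16/(ε^2*(n:ℝ)^2))) :=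
        binExp_mono _ hp0.le hp1.le hb
    _ = binExp (n-1) p (fun k => ((k:ℝ)-((n:ℝ)-1)*p)^2) * (16/(ε^2*(n:ℝ)^2)) :=
        binExp_mul_const _ _ _ _
    _ = ((n-1:ℕ):ℝ)*p*(1-p) * (16/(ε^2*(n:ℝ)^2)) := by
        rw [show (fun k : ℕ => ((k:ℝ)-((n:ℝ)-1)*p)^2) = (fun k : ℕ => ((k:ℝ)-((n-1:ℕ):ℝ)*p)^2) by
          funext k; rw [hcast], binExp_var]
    _ ≤ 16/(ε^2*(n:ℝ)) := by
        have hM0 : (0:ℝ) ≤ ((n-1:ℕ):ℝ) := Nat.cast_nonneg _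
        have hMn : ((n-1:ℕ):ℝ) ≤ (n:ℝ) := by rw [hcast]; linarith
        have h1 : ((n-1:ℕ):ℝ)*p*(1-p) ≤ (n:ℝ) := by
          have ha : ((n-1:ℕ):ℝ)*p ≤ ((n-1:ℕ):ℝ) := mul_le_of_le_one_right hM0 hp1.le
          have hb' : ((n-1:ℕ):ℝ)*p*(1-p) ≤ ((n-1:ℕ):ℝ)*p :=
            mul_le_of_le_one_right (mul_nonneg hM0 hp0.le) (by linarith)
          linarith
        have h2 := mul_le_mul_of_nonneg_right h1 (le_of_lt (by positivity : (0:ℝ) < 16/(ε^2*(n:ℝ)^2)))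
        have h3 : (n:ℝ) * (16/(ε^2*(n:ℝ)^2)) = 16/(ε^2*(n:ℝ)) := by
          field_simp
        linarith


/-- E[G_n] → p(2-p)/2, and G_n → p(2-p)/2 in probability and in L^r for every r > 0. -/
theorem stmt18 (p : ℝ) (hp0 : 0 < p) (hp1 : p < 1) :
    Filter.Tendsto (fun n : ℕ => binExp (n-1) p (giniF n))
      Filter.atTop (𝓝 (p*(2-p)/2)) ∧
    (∀ ε : ℝ, 0 < ε → Filter.Tendsto (fun n : ℕ =>
      binExp (n-1) p (fun k => if ε ≤ |giniF n k - p*(2-p)/2| then (1 : ℝ) else 0))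
      Filter.atTop (𝓝 0)) ∧
    (∀ r : ℝ, 0 < r → Filter.Tendsto (fun n : ℕ =>
      binExp (n-1) p (fun k => |giniF n k - p*(2-p)/2| ^ r))
      Filter.atTop (𝓝 0)) := by
  have hev : ∀ ε c : ℝ, 0 < ε → 0 < c → ∀ᶠ n : ℕ in atTop,
      binExp (n-1) p (fun k => if ε ≤ |giniF n k - p*(2-p)/2| then (1:ℝ) else 0) ≤ c := by
    intro ε c hε hc
    exact (part2 p hp0 hp1 ε hε).eventually_le_const hc
  have habs : ∀ n : ℕ, |binExp (n-1) p (giniF n) - p*(2-p)/2|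
      ≤ binExp (n-1) p (fun k => |giniF n k - p*(2-p)/2|) := by
    intro n
    rw [← binExp_sub_const (n-1) p (p*(2-p)/2) (giniF n)]
    exact abs_binExp_le _ hp0.le hp1.le _
  have hh : Tendsto (fun n : ℕ => binExp (n-1) p (fun k => |giniF n k - p*(2-p)/2|))
      atTop (𝓝 0) := by
    apply tendsto_zero_of_le
    · exact Filter.Eventually.of_forall fun n =>
        binExp_nonneg _ hp0.le hp1.le fun k _ => abs_nonneg _
    · intro δ hδ
      filter_upwards [Filter.eventually_ge_atTop 1,
        hev (δ/2) (δ/2) (half_pos hδ) (half_pos hδ)] with n hn1 hI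
      have hpt : ∀ k ∈ Finset.range ((n-1)+1), |giniF n k - p*(2-p)/2|
          ≤ δ/2 + (if δ/2 ≤ |giniF n k - p*(2-p)/2| then (1:ℝ) else 0) := by
        intro k hk
        split_ifs with hif
        · have := gini_bounded p hp0 hp1 hn1 hk; linarith
        · push_neg at hif; linarith
      calc binExp (n-1) p (fun k => |giniF n k - p*(2-p)/2|)
          ≤ binExp (n-1) p (fun k => δ/2 + (if δ/2 ≤ |giniF n k - p*(2-p)/2| then (1:ℝ) else 0)) :=
            binExp_mono _ hp0.le hp1.le hpt
        _ = δ/2 + binExp (n-1) p (fun k => if δ/2 ≤ |giniF n k - p*(2-p)/2| then (1:ℝ) else 0) :=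
            binExp_const_add _ _ _ _
        _ ≤ δ := by linarith
  have h1 : Tendsto (fun n : ℕ => binExp (n-1) p (giniF n)) atTop (𝓝 (p*(2-p)/2)) := by
    have hz : Tendsto (fun n : ℕ => binExp (n-1) p (giniF n) - p*(2-p)/2) atTop (𝓝 0) :=
      squeeze_zero_norm (fun n => by simpa [Real.norm_eq_abs] using habs n) hh
    have := hz.add_const (p*(2-p)/2)
    simpa using this
  refine ⟨h1, fun ε hε => part2 p hp0 hp1 ε hε, ?_⟩
  intro r hr
  apply tendsto_zero_of_le
  · exact Filter.Eventually.of_forall fun n =>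
      binExp_nonneg _ hp0.le hp1.le fun k _ => Real.rpow_nonneg (abs_nonneg _) r
  · intro δ hδ
    have hε₀ : 0 < (δ/2) ^ r⁻¹ := Real.rpow_pos_of_pos (half_pos hδ) _
    have hεr : ((δ/2) ^ r⁻¹) ^ r = δ/2 := Real.rpow_inv_rpow (half_pos hδ).le (ne_of_gt hr)
    filter_upwards [Filter.eventually_ge_atTop 1,
      hev ((δ/2) ^ r⁻¹) (δ/2) hε₀ (half_pos hδ)] with n hn1 hI
    have hpt : ∀ k ∈ Finset.range ((n-1)+1), |giniF n k - p*(2-p)/2| ^ r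
        ≤ δ/2 + (if (δ/2) ^ r⁻¹ ≤ |giniF n k - p*(2-p)/2| then (1:ℝ) else 0) := by
      intro k hk
      split_ifs with hif
      · have hb := gini_bounded p hp0 hp1 hn1 hk
        have := Real.rpow_le_one (abs_nonneg _) hb hr.le
        linarith
      · push_neg at hif
        have := Real.rpow_le_rpow (abs_nonneg _) hif.le hr.le
        rw [hεr] at this
        linarith
    calc binExp (n-1) p (fun k => |giniF n k - p*(2-p)/2| ^ r)
        ≤ binExp (n-1) p (fun k => δ/2 + (if (δ/2) ^ r⁻¹ ≤ |giniF n k - p*(2-p)/2| then (1:ℝ) else 0)) :=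
          binExp_mono _ hp0.le hp1.le hpt
      _ = δ/2 + binExp (n-1) p (fun k => if (δ/2) ^ r⁻¹ ≤ |giniF n k - p*(2-p)/2| then (1:ℝ) else 0) :=
          binExp_const_add _ _ _ _
      _ ≤ δ := by linarith
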